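/- Let X be a real random variable with E[X]=0 and Z a standard normal random variable independent of X. For p ≥ 1, define f(a) = E[|X - a(X+Z)|^p]. Then f is non-decreasing on [1,∞): for all a ≥ 1, f'(a) = E[g((a-1)X + aZ)(X+Z)] ≥ 0, where g(t) = p·sign(t)·|t|^{p-1}. -/

import Mathlib

open MeasureTheory ProbabilityTheory Real

noncomputable def Gf (p t : ℝ) : ℝ := p * Real.sign t * |t| ^ (p - 1)

lemma sign_mul_self' (t : ℝ) : Real.sign t * t = |t| := by
  rcases lt_trichotomy t 0 with h | h | h
  · rw [Real.sign_of_neg h, abs_of_neg h]; ring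
  · simp [h]
  · rw [Real.sign_of_pos h, abs_of_pos h]; ring

lemma abs_sign_le' (t : ℝ) : |Real.sign t| ≤ 1 := by
  rcases Real.sign_apply_eq t with h | h | h <;> rw [h] <;> norm_num

lemma Gf_neg (p t : ℝ) : Gf p (-t) = - Gf p t := by
  unfold Gf
  rw [Real.sign_neg, abs_neg]; ring

lemma Gf_zero (p : ℝ) : Gf p 0 = 0 := by simp [Gf]

lemma Gf_mono {p : ℝ} (hp : 1 ≤ p) : Monotone (Gf p) := by
  intro s t hst
  have hp0 : (0:ℝ) ≤ p := by linarith
  have hq : (0:ℝ) ≤ p - 1 := by linarith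
  unfold Gf
  rw [mul_assoc, mul_assoc]
  refine mul_le_mul_of_nonneg_left ?_ hp0
  rcases lt_trichotomy s 0 with hs | hs | hs
  · rcases lt_trichotomy t 0 with ht | ht | ht
    · rw [Real.sign_of_neg hs, Real.sign_of_neg ht]
      have habs : |t| ≤ |s| := by
        rw [abs_of_neg hs, abs_of_neg ht]; linarith
      have := Real.rpow_le_rpow (abs_nonneg t) habs hq
      nlinarith
    · subst ht
      rw [Real.sign_of_neg hs]
      have := Real.rpow_nonneg (abs_nonneg s) (p - 1)
      simp
      nlinarith
    · rw [Real.sign_of_neg hs, Real.sign_of_pos ht]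
      have h1 := Real.rpow_nonneg (abs_nonneg s) (p - 1)
      have h2 := Real.rpow_nonneg (abs_nonneg t) (p - 1)
      nlinarith
  · subst hs
    rcases lt_trichotomy t 0 with ht | ht | ht
    · linarith
    · subst ht; exact le_rfl
    · rw [Real.sign_zero, Real.sign_of_pos ht]
      have := Real.rpow_nonneg (abs_nonneg t) (p - 1)
      nlinarith
  · have ht : 0 < t := lt_of_lt_of_le hs hst
    rw [Real.sign_of_pos hs, Real.sign_of_pos ht]
    have habs : |s| ≤ |t| := by rw [abs_of_pos hs, abs_of_pos ht]; linarith
    have := Real.rpow_le_rpow (abs_nonneg s) habs hq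
    nlinarith



lemma bern {p : ℝ} (hp : 1 ≤ p) {s t : ℝ} (hs : 0 < s) (ht : 0 ≤ t) :
    s ^ p + p * s ^ (p - 1) * (t - s) ≤ t ^ p := by
  have hr : (-1:ℝ) ≤ (t - s) / s := by
    rw [le_div_iff₀ hs]; linarith
  have h := one_add_mul_self_le_rpow_one_add hr hp
  have h1 : 1 + (t - s) / s = t / s := by field_simp; ring
  rw [h1, Real.div_rpow ht hs.le] at h
  have hsp : 0 < s ^ p := Real.rpow_pos_of_pos hs p
  have h2 := mul_le_mul_of_nonneg_left h hsp.le
  have h3 : s ^ p * (t ^ p / s ^ p) = t ^ p := by field_simp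
  have hsp1 : s ^ p = s ^ (p - 1) * s := by
    rw [← Real.rpow_add_one hs.ne' (p - 1)]; ring_nf
  calc s ^ p + p * s ^ (p - 1) * (t - s)
      = s ^ p * (1 + p * ((t - s) / s)) := by
        rw [mul_add, mul_one]
        congr 1
        rw [hsp1]; field_simp
    _ ≤ s ^ p * (t ^ p / s ^ p) := h2
    _ = t ^ p := h3

lemma convex_ineq {p : ℝ} (hp : 1 ≤ p) (u v : ℝ) :
    |u| ^ p + Gf p u * (v - u) ≤ |v| ^ p := by
  rcases eq_or_ne u 0 with rfl | hu
  · have hGf : Gf p 0 = 0 := by simp [Gf]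
    rw [hGf, zero_mul, add_zero, abs_zero, Real.zero_rpow (by linarith : p ≠ 0)]
    exact Real.rpow_nonneg (abs_nonneg v) p
  · have hq0 : (0:ℝ) ≤ p * |u| ^ (p - 1) :=
      mul_nonneg (by linarith) (Real.rpow_nonneg (abs_nonneg u) _)
    have hsv : Real.sign u * v ≤ |v| := by
      calc Real.sign u * v ≤ |Real.sign u * v| := le_abs_self _
        _ = |Real.sign u| * |v| := abs_mul _ _
        _ ≤ 1 * |v| := mul_le_mul_of_nonneg_right (abs_sign_le' u) (abs_nonneg v)
        _ = |v| := one_mul _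
    have e : Gf p u * (v - u) = p * |u| ^ (p - 1) * (Real.sign u * v - |u|) := by
      unfold Gf
      rw [show Real.sign u * v - |u| = Real.sign u * v - Real.sign u * u from by
        rw [sign_mul_self']]
      ring
    have h1 : Gf p u * (v - u) ≤ p * |u| ^ (p - 1) * (|v| - |u|) := by
      rw [e]
      exact mul_le_mul_of_nonneg_left (by linarith) hq0
    have h2 := bern hp (abs_pos.mpr hu) (abs_nonneg v)
    linarith

lemma abs_Gf_le {p : ℝ} (hp : 1 ≤ p) (t : ℝ) : |Gf p t| ≤ p * |t| ^ (p - 1) := by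
  unfold Gf
  have hr : (0:ℝ) ≤ |t| ^ (p - 1) := Real.rpow_nonneg (abs_nonneg t) _
  rw [abs_mul, abs_mul, abs_of_nonneg (by linarith : (0:ℝ) ≤ p),
    abs_of_nonneg hr]
  have h1 : p * |Real.sign t| ≤ p * 1 :=
    mul_le_mul_of_nonneg_left (abs_sign_le' t) (by linarith)
  have h2 := mul_le_mul_of_nonneg_right h1 hr
  rw [mul_one] at h2
  exact h2

lemma young {p : ℝ} (hp : 1 ≤ p) (t u : ℝ) :
    |t| ^ (p - 1) * |u| ≤ |t| ^ p + |u| ^ p := by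
  have hq : (0:ℝ) ≤ p - 1 := by linarith
  have e : ∀ x : ℝ, |x| ^ (p - 1) * |x| = |x| ^ p := by
    intro x
    have h := (Real.rpow_add_of_nonneg (abs_nonneg x) hq zero_le_one).symm
    rw [Real.rpow_one] at h
    rw [h, show p - 1 + 1 = p from by ring]
  rcases le_total |u| |t| with h | h
  · have h1 : |t| ^ (p - 1) * |u| ≤ |t| ^ (p - 1) * |t| :=
      mul_le_mul_of_nonneg_left h (Real.rpow_nonneg (abs_nonneg t) _)
    rw [e] at h1
    have := Real.rpow_nonneg (abs_nonneg u) p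
    linarith
  · have h1 : |t| ^ (p - 1) ≤ |u| ^ (p - 1) :=
      Real.rpow_le_rpow (abs_nonneg t) h hq
    have h2 : |t| ^ (p - 1) * |u| ≤ |u| ^ (p - 1) * |u| :=
      mul_le_mul_of_nonneg_right h1 (abs_nonneg u)
    rw [e] at h2
    have := Real.rpow_nonneg (abs_nonneg t) p
    linarith

lemma abs_Gf_mul_le {p : ℝ} (hp : 1 ≤ p) (t s : ℝ) :
    |Gf p t * s| ≤ p * (|t| ^ p + |s| ^ p) := by
  rw [abs_mul]
  calc |Gf p t| * |s| ≤ p * |t| ^ (p - 1) * |s| :=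
        mul_le_mul_of_nonneg_right (abs_Gf_le hp t) (abs_nonneg s)
    _ = p * (|t| ^ (p - 1) * |s|) := by ring
    _ ≤ p * (|t| ^ p + |s| ^ p) :=
        mul_le_mul_of_nonneg_left (young hp t s) (by linarith)

lemma add_rpow_le {q : ℝ} (hq : 0 ≤ q) (x y : ℝ) :
    |x + y| ^ q ≤ 2 ^ q * (|x| ^ q + |y| ^ q) := by
  have h1 : |x + y| ≤ 2 * max |x| |y| := by
    have := abs_add_le x y
    rcases le_total |x| |y| with h | h
    · rw [max_eq_right h]; linarith
    · rw [max_eq_left h]; linarith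
  have hm : (0:ℝ) ≤ max |x| |y| := le_trans (abs_nonneg x) (le_max_left _ _)
  calc |x + y| ^ q ≤ (2 * max |x| |y|) ^ q :=
        Real.rpow_le_rpow (abs_nonneg _) h1 hq
    _ = 2 ^ q * (max |x| |y|) ^ q := Real.mul_rpow (by norm_num) hm
    _ ≤ 2 ^ q * (|x| ^ q + |y| ^ q) := by
        refine mul_le_mul_of_nonneg_left ?_ (Real.rpow_nonneg (by norm_num) q)
        rcases le_total |x| |y| with h | h
        · rw [max_eq_right h]
          have := Real.rpow_nonneg (abs_nonneg x) q
          linarith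
        · rw [max_eq_left h]
          have := Real.rpow_nonneg (abs_nonneg y) q
          linarith

lemma abs_mul_rpow_abs {q : ℝ} (hq : 0 ≤ q) (x y : ℝ) :
    |x * y| ^ q = |x| ^ q * |y| ^ q := by
  rw [abs_mul, Real.mul_rpow (abs_nonneg x) (abs_nonneg y)]

lemma measurable_sign' : Measurable (Real.sign) := by
  have h : Real.sign = fun r : ℝ => if r < 0 then (-1:ℝ) else if 0 < r then 1 else 0 := by
    funext r; rfl
  rw [h]
  exact Measurable.ite (measurableSet_lt measurable_id measurable_const) measurable_const
    (Measurable.ite (measurableSet_lt measurable_const measurable_id) measurable_const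
      measurable_const)

lemma Gf_meas (p : ℝ) : Measurable (Gf p) := by
  unfold Gf
  exact (measurable_const.mul measurable_sign').mul
    (by fun_prop : Measurable fun t : ℝ => |t| ^ (p - 1))

lemma integrable_abs_rpow_mul_exp_neg_mul_sq {b : ℝ} (hb : 0 < b) {s : ℝ} (hs : -1 < s) :
    Integrable fun x : ℝ => |x| ^ s * rexp (-b * x ^ 2) := by
  have base : IntegrableOn (fun x : ℝ => |x| ^ s * rexp (-b * x ^ 2)) (Set.Ioi 0) := by
    refine (integrableOn_rpow_mul_exp_neg_mul_sq hb hs).congr_fun ?_ measurableSet_Ioi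
    intro x hx
    show x ^ s * rexp (-b * x ^ 2) = |x| ^ s * rexp (-b * x ^ 2)
    rw [abs_of_pos (Set.mem_Ioi.mp hx)]
  rw [← integrableOn_univ, ← Set.Iio_union_Ici (a := (0:ℝ)), integrableOn_union,
    integrableOn_Ici_iff_integrableOn_Ioi]
  refine ⟨?_, base⟩
  rw [← (Measure.measurePreserving_neg (volume : Measure ℝ)).integrableOn_comp_preimage
      (Homeomorph.neg ℝ).measurableEmbedding]
  simp only [Function.comp_def, neg_sq, abs_neg, Set.neg_preimage, Set.neg_Iio, neg_neg, neg_zero]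
  exact base

lemma gaussian_moment {q : ℝ} (hq : 0 ≤ q) :
    Integrable (fun z : ℝ => |z| ^ q) (gaussianReal 0 1) := by
  rw [gaussianReal_of_var_ne_zero 0 one_ne_zero,
    integrable_withDensity_iff (measurable_gaussianPDF 0 1)
      (Filter.Eventually.of_forall fun x => ENNReal.ofReal_lt_top)]
  have he : ∀ x : ℝ, |x| ^ q * (gaussianPDF 0 1 x).toReal
      = (Real.sqrt (2 * π * ((1:NNReal):ℝ)))⁻¹ * (|x| ^ q * rexp (-(2⁻¹ : ℝ) * x ^ 2)) := by
    intro x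
    rw [gaussianPDF, ENNReal.toReal_ofReal (gaussianPDFReal_nonneg _ _ _), gaussianPDFReal]
    rw [show -(x - 0) ^ 2 / (2 * ((1:NNReal):ℝ)) = -(2⁻¹ : ℝ) * x ^ 2 from by push_cast; ring]
    ring
  simp only [he]
  exact (integrable_abs_rpow_mul_exp_neg_mul_sq (by norm_num) (lt_of_lt_of_le neg_one_lt_zero hq)).const_mul _

lemma gaussian_integrable_id : Integrable (fun z : ℝ => z) (gaussianReal 0 1) := by
  have h := gaussian_moment (zero_le_one : (0:ℝ) ≤ 1)
  have he : (fun z : ℝ => |z| ^ (1:ℝ)) = fun z : ℝ => ‖z‖ := by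
    funext z; rw [Real.rpow_one, Real.norm_eq_abs]
  rw [he] at h
  exact (integrable_norm_iff aestronglyMeasurable_id).mp h

lemma gaussian_mean : ∫ z, z ∂(gaussianReal 0 1) = 0 := by
  have hmap : (gaussianReal 0 1).map (((-1:ℝ)) * ·) = gaussianReal 0 1 := by
    rw [gaussianReal_map_const_mul]
    norm_num
  have h : ∫ z, z ∂((gaussianReal 0 1).map ((-1:ℝ) * ·))
      = ∫ z, (-1:ℝ) * z ∂(gaussianReal 0 1) :=
    integral_map (by fun_prop) aestronglyMeasurable_id
  rw [hmap] at h
  simp only [neg_one_mul] at h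
  rw [integral_neg] at h
  linarith


lemma abs_mul_rpow_self {p : ℝ} (hp : 1 ≤ p) (x : ℝ) : |x| * |x| ^ (p - 1) = |x| ^ p := by
  have hq : (0:ℝ) ≤ p - 1 := by linarith
  have h := (Real.rpow_add_of_nonneg (abs_nonneg x) hq zero_le_one).symm
  rw [Real.rpow_one] at h
  rw [mul_comm, h, show p - 1 + 1 = p from by ring]

lemma Gf_pt_bound {p : ℝ} (hp : 1 ≤ p) (c a z : ℝ) :
    ‖Gf p (c + a * z)‖ ≤ p * 2 ^ (p-1) * |c| ^ (p-1) + p * 2 ^ (p-1) * |a| ^ (p-1) * |z| ^ (p-1) := by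
  have hq : (0:ℝ) ≤ p - 1 := by linarith
  have hp0 : (0:ℝ) ≤ p := by linarith
  have h1 : ‖Gf p (c + a * z)‖ ≤ p * |c + a * z| ^ (p - 1) := abs_Gf_le hp _
  have h2 : |c + a * z| ^ (p-1) ≤ 2 ^ (p-1) * (|c| ^ (p-1) + |a * z| ^ (p-1)) :=
    add_rpow_le hq c (a * z)
  have h3 : |a * z| ^ (p-1) = |a| ^ (p-1) * |z| ^ (p-1) := abs_mul_rpow_abs hq a z
  rw [h3] at h2
  nlinarith [mul_le_mul_of_nonneg_left h2 hp0]



section NuSide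

variable {p : ℝ}

lemma L_IG (hp : 1 ≤ p) (c a : ℝ) :
    Integrable (fun z : ℝ => Gf p (c + a * z)) (gaussianReal 0 1) := by
  have hq : (0:ℝ) ≤ p - 1 := by linarith
  have hbnd : Integrable (fun z : ℝ =>
      p * 2 ^ (p-1) * |c| ^ (p-1) + p * 2 ^ (p-1) * |a| ^ (p-1) * |z| ^ (p-1))
      (gaussianReal 0 1) :=
    (integrable_const _).add ((gaussian_moment hq).const_mul _)
  refine hbnd.mono' ?_ ?_
  · exact ((Gf_meas p).comp (measurable_const.add (measurable_id.const_mul a))).aestronglyMeasurable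
  · refine Filter.Eventually.of_forall fun z => ?_
    have h1 : ‖Gf p (c + a * z)‖ ≤ p * |c + a * z| ^ (p - 1) := abs_Gf_le hp _
    have h2 : |c + a * z| ^ (p-1) ≤ 2 ^ (p-1) * (|c| ^ (p-1) + |a * z| ^ (p-1)) :=
      add_rpow_le hq c (a * z)
    have h3 : |a * z| ^ (p-1) = |a| ^ (p-1) * |z| ^ (p-1) := abs_mul_rpow_abs hq a z
    rw [h3] at h2
    have hp0 : (0:ℝ) ≤ p := by linarith
    nlinarith [mul_le_mul_of_nonneg_left h2 hp0]

lemma L_IGz (hp : 1 ≤ p) (c a : ℝ) :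
    Integrable (fun z : ℝ => Gf p (c + a * z) * z) (gaussianReal 0 1) := by
  have hp0 : (0:ℝ) ≤ p := by linarith
  have hP : (0:ℝ) ≤ p := hp0
  have hbnd : Integrable (fun z : ℝ =>
      p * 2 ^ p * |c| ^ p + (p * 2 ^ p * |a| ^ p + p) * |z| ^ p) (gaussianReal 0 1) :=
    (integrable_const _).add ((gaussian_moment hp0).const_mul _)
  refine hbnd.mono' ?_ ?_
  · exact (((Gf_meas p).comp (measurable_const.add (measurable_id.const_mul a))).mul
      measurable_id).aestronglyMeasurable
  · refine Filter.Eventually.of_forall fun z => ?_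
    have h1 : ‖Gf p (c + a * z) * z‖ ≤ p * (|c + a * z| ^ p + |z| ^ p) := abs_Gf_mul_le hp _ _
    have h2 : |c + a * z| ^ p ≤ 2 ^ p * (|c| ^ p + |a * z| ^ p) := add_rpow_le hp0 c (a * z)
    have h3 : |a * z| ^ p = |a| ^ p * |z| ^ p := abs_mul_rpow_abs hp0 a z
    rw [h3] at h2
    nlinarith [mul_le_mul_of_nonneg_left h2 hp0]

lemma L_posz (hp : 1 ≤ p) (c : ℝ) {a : ℝ} (ha : 0 ≤ a) :
    0 ≤ ∫ z, Gf p (c + a * z) * z ∂(gaussianReal 0 1) := by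
  have h0 : ∫ z, Gf p c * z ∂(gaussianReal 0 1) = 0 := by
    rw [integral_const_mul, gaussian_mean, mul_zero]
  have hint0 : Integrable (fun z : ℝ => Gf p c * z) (gaussianReal 0 1) :=
    gaussian_integrable_id.const_mul _
  have hmono : ∀ z : ℝ, Gf p c * z ≤ Gf p (c + a * z) * z := by
    intro z
    rcases le_total 0 z with hz | hz
    · exact mul_le_mul_of_nonneg_right (Gf_mono hp (by nlinarith)) hz
    · exact mul_le_mul_of_nonpos_right (Gf_mono hp (by nlinarith)) hz
  calc (0:ℝ) = ∫ z, Gf p c * z ∂(gaussianReal 0 1) := h0.symm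
    _ ≤ ∫ z, Gf p (c + a * z) * z ∂(gaussianReal 0 1) :=
        integral_mono hint0 (L_IGz hp c a) hmono

end NuSide



theorem lp_risk_monotone_above_one
    {Ω : Type*} [MeasureSpace Ω] [IsProbabilityMeasure (ℙ : Measure Ω)]
    (X Z : Ω → ℝ) (p : ℝ) (hp : 1 ≤ p)
    (hXmeas : Measurable X) (hZmeas : Measurable Z)
    (hXint : Integrable X) (hXmean : ∫ ω, X ω = 0)
    (hXp : Integrable (fun ω => |X ω| ^ p))
    (hZ : Measure.map Z ℙ = gaussianReal 0 1)
    (hindep : IndepFun X Z)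
    (g : ℝ → ℝ) (hg : ∀ t, g t = p * Real.sign t * |t| ^ (p - 1)) :
    (∀ a ≥ (1 : ℝ),
        0 ≤ ∫ ω, g ((a - 1) * X ω + a * Z ω) * (X ω + Z ω)) ∧
      MonotoneOn (fun a : ℝ => ∫ ω, |X ω - a * (X ω + Z ω)| ^ p)
        (Set.Ici (1 : ℝ)) := by
  have hp0 : (0:ℝ) ≤ p := by linarith
  have hq0 : (0:ℝ) ≤ p - 1 := by linarith
  -- Integrability of |Z|^p on Ω
  have hZp : Integrable (fun ω => |Z ω| ^ p) ℙ := by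
    have h : Integrable (fun z : ℝ => |z| ^ p) (Measure.map Z ℙ) := by
      rw [hZ]; exact gaussian_moment hp0
    have h2 := (integrable_map_measure
      (by fun_prop : Measurable fun z : ℝ => |z| ^ p).aestronglyMeasurable
      hZmeas.aemeasurable).mp h
    simpa [Function.comp_def] using h2
  -- linear combinations
  have comb_int : ∀ c₁ c₂ : ℝ, Integrable (fun ω => |c₁ * X ω + c₂ * Z ω| ^ p) ℙ := by
    intro c₁ c₂
    have hbnd : Integrable
        (fun ω => 2 ^ p * (|c₁| ^ p * |X ω| ^ p + |c₂| ^ p * |Z ω| ^ p)) ℙ :=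
      ((hXp.const_mul _).add (hZp.const_mul _)).const_mul _
    refine hbnd.mono' ?_ ?_
    · have : Measurable (fun ω => |c₁ * X ω + c₂ * Z ω| ^ p) := by fun_prop
      exact this.aestronglyMeasurable
    · refine Filter.Eventually.of_forall fun ω => ?_
      rw [Real.norm_eq_abs, abs_of_nonneg (Real.rpow_nonneg (abs_nonneg _) _)]
      calc |c₁ * X ω + c₂ * Z ω| ^ p
          ≤ 2 ^ p * (|c₁ * X ω| ^ p + |c₂ * Z ω| ^ p) := add_rpow_le hp0 _ _
        _ = 2 ^ p * (|c₁| ^ p * |X ω| ^ p + |c₂| ^ p * |Z ω| ^ p) := by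
            rw [abs_mul_rpow_abs hp0, abs_mul_rpow_abs hp0]
  have hXZp : Integrable (fun ω => |X ω + Z ω| ^ p) ℙ := by
    have := comb_int 1 1
    simpa using this
  -- Integrability of Gf p (W_a) * (X+Z) on Ω
  have hGW : ∀ a : ℝ,
      Integrable (fun ω => Gf p ((a - 1) * X ω + a * Z ω) * (X ω + Z ω)) ℙ := by
    intro a
    have hbnd : Integrable
        (fun ω => p * (|(a - 1) * X ω + a * Z ω| ^ p + |X ω + Z ω| ^ p)) ℙ :=
      ((comb_int (a-1) a).add hXZp).const_mul _
    refine hbnd.mono' ?_ ?_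
    · exact (((Gf_meas p).comp ((hXmeas.const_mul _).add (hZmeas.const_mul _))).mul
        (hXmeas.add hZmeas)).aestronglyMeasurable
    · exact Filter.Eventually.of_forall fun ω => abs_Gf_mul_le hp _ _
  -- pushforward measure of X
  haveI : IsProbabilityMeasure (Measure.map X ℙ) :=
    Measure.isProbabilityMeasure_map hXmeas.aemeasurable
  have hμint : Integrable (fun x : ℝ => x) (Measure.map X ℙ) :=
    (integrable_map_measure aestronglyMeasurable_id hXmeas.aemeasurable).mpr hXint
  have hμmean : ∫ x, x ∂(Measure.map X ℙ) = 0 := by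
    have h := integral_map (μ := (ℙ : Measure Ω)) (φ := X) (f := fun x : ℝ => x)
      hXmeas.aemeasurable aestronglyMeasurable_id
    rw [h]
    exact hXmean
  have hμp : Integrable (fun x : ℝ => |x| ^ p) (Measure.map X ℙ) := by
    refine (integrable_map_measure
      (by fun_prop : Measurable fun x : ℝ => |x| ^ p).aestronglyMeasurable
      hXmeas.aemeasurable).mpr ?_
    simpa [Function.comp_def] using hXp
  -- PART 1 (in Gf form)
  have part1 : ∀ a : ℝ, 1 ≤ a →
      0 ≤ ∫ ω, Gf p ((a - 1) * X ω + a * Z ω) * (X ω + Z ω) := by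
    intro a ha
    have ha0 : (0:ℝ) ≤ a := by linarith
    have ha1 : (0:ℝ) ≤ a - 1 := by linarith
    have hFmeas : Measurable (fun q : ℝ × ℝ => Gf p ((a - 1) * q.1 + a * q.2) * (q.1 + q.2)) :=
      ((Gf_meas p).comp ((measurable_fst.const_mul _).add (measurable_snd.const_mul _))).mul
        (measurable_fst.add measurable_snd)
    have hpair : (ℙ : Measure Ω).map (fun ω => (X ω, Z ω))
        = (Measure.map X ℙ).prod (gaussianReal 0 1) := by
      rw [← hZ]
      exact (indepFun_iff_map_prod_eq_prod_map_map hXmeas.aemeasurable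
        hZmeas.aemeasurable).mp hindep
    have hFint : Integrable (fun q : ℝ × ℝ => Gf p ((a - 1) * q.1 + a * q.2) * (q.1 + q.2))
        ((Measure.map X ℙ).prod (gaussianReal 0 1)) := by
      rw [← hpair]
      exact (integrable_map_measure hFmeas.aestronglyMeasurable
        (hXmeas.aemeasurable.prodMk hZmeas.aemeasurable)).mpr
        (by simpa [Function.comp_def] using hGW a)
    have hEq : ∫ ω, Gf p ((a - 1) * X ω + a * Z ω) * (X ω + Z ω)
        = ∫ x, ∫ z, Gf p ((a - 1) * x + a * z) * (x + z) ∂(gaussianReal 0 1)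
            ∂(Measure.map X ℙ) := by
      calc ∫ ω, Gf p ((a - 1) * X ω + a * Z ω) * (X ω + Z ω)
          = ∫ q, Gf p ((a - 1) * q.1 + a * q.2) * (q.1 + q.2)
              ∂((ℙ : Measure Ω).map (fun ω => (X ω, Z ω))) :=
            (integral_map (hXmeas.aemeasurable.prodMk hZmeas.aemeasurable)
              hFmeas.aestronglyMeasurable).symm
        _ = ∫ q, Gf p ((a - 1) * q.1 + a * q.2) * (q.1 + q.2)
              ∂((Measure.map X ℙ).prod (gaussianReal 0 1)) := by rw [hpair]
        _ = ∫ x, ∫ z, Gf p ((a - 1) * x + a * z) * (x + z) ∂(gaussianReal 0 1)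
              ∂(Measure.map X ℙ) := integral_prod _ hFint
    rw [hEq]
    -- notation for the inner integrals
    have hIG : ∀ x : ℝ, Integrable (fun z => Gf p ((a - 1) * x + a * z)) (gaussianReal 0 1) :=
      fun x => L_IG hp _ _
    have hIGz : ∀ x : ℝ, Integrable (fun z => Gf p ((a - 1) * x + a * z) * z)
        (gaussianReal 0 1) := fun x => L_IGz hp _ _
    -- step 1 : pointwise lower bound for inner integral
    have step1 : ∀ x : ℝ,
        x * (∫ z, Gf p ((a - 1) * x + a * z) ∂(gaussianReal 0 1))
          ≤ ∫ z, Gf p ((a - 1) * x + a * z) * (x + z) ∂(gaussianReal 0 1) := by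
      intro x
      have e1 : (fun z : ℝ => Gf p ((a - 1) * x + a * z) * (x + z))
          = fun z => x * Gf p ((a - 1) * x + a * z) + Gf p ((a - 1) * x + a * z) * z := by
        funext z; ring
      rw [e1, integral_add ((hIG x).const_mul x) (hIGz x), integral_const_mul]
      have hP := L_posz hp ((a - 1) * x) ha0
      linarith
    -- strong measurability of the inner Gf-integral
    have hSM : StronglyMeasurable
        (fun x : ℝ => ∫ z, Gf p ((a - 1) * x + a * z) ∂(gaussianReal 0 1)) := by
      have hm : StronglyMeasurable (fun q : ℝ × ℝ => Gf p ((a - 1) * q.1 + a * q.2)) :=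
        ((Gf_meas p).comp ((measurable_fst.const_mul _).add
          (measurable_snd.const_mul _))).stronglyMeasurable
      exact hm.integral_prod_right'
    -- bound on the inner Gf-integral
    have hbnd : ∀ x : ℝ,
        |∫ z, Gf p ((a - 1) * x + a * z) ∂(gaussianReal 0 1)|
          ≤ p * 2 ^ (p-1) * |a - 1| ^ (p-1) * |x| ^ (p-1)
            + p * 2 ^ (p-1) * |a| ^ (p-1) * (∫ z, |z| ^ (p-1) ∂(gaussianReal 0 1)) := by
      intro x
      have h1 := norm_integral_le_integral_norm
        (fun z => Gf p ((a - 1) * x + a * z)) (μ := gaussianReal 0 1)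
      have h2 : ∫ z, ‖Gf p ((a - 1) * x + a * z)‖ ∂(gaussianReal 0 1)
          ≤ ∫ z, (p * 2 ^ (p-1) * |(a - 1) * x| ^ (p-1)
              + p * 2 ^ (p-1) * |a| ^ (p-1) * |z| ^ (p-1)) ∂(gaussianReal 0 1) := by
        refine integral_mono (hIG x).norm
          ((integrable_const _).add ((gaussian_moment hq0).const_mul _))
          fun z => Gf_pt_bound hp _ _ _
      rw [integral_add (integrable_const _) ((gaussian_moment hq0).const_mul _),
        integral_const, integral_const_mul] at h2
      simp only [measure_univ, probReal_univ, ENNReal.toReal_one, smul_eq_mul, one_mul] at h2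
      rw [abs_mul_rpow_abs hq0] at h2
      rw [Real.norm_eq_abs] at h1
      calc |∫ z, Gf p ((a - 1) * x + a * z) ∂(gaussianReal 0 1)|
          ≤ ∫ z, ‖Gf p ((a - 1) * x + a * z)‖ ∂(gaussianReal 0 1) := h1
        _ ≤ _ := by linarith
    -- integrability of x * (inner Gf integral)
    have step2 : Integrable
        (fun x : ℝ => x * ∫ z, Gf p ((a - 1) * x + a * z) ∂(gaussianReal 0 1))
        (Measure.map X ℙ) := by
      have hbint : Integrable
          (fun x : ℝ => p * 2 ^ (p-1) * |a - 1| ^ (p-1) * |x| ^ p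
            + p * 2 ^ (p-1) * |a| ^ (p-1) * (∫ z, |z| ^ (p-1) ∂(gaussianReal 0 1)) * |x|)
          (Measure.map X ℙ) :=
        (hμp.const_mul _).add (hμint.abs.const_mul _)
      refine hbint.mono' (aestronglyMeasurable_id.mul hSM.aestronglyMeasurable) ?_
      refine Filter.Eventually.of_forall fun x => ?_
      rw [Real.norm_eq_abs, abs_mul]
      calc |x| * |∫ z, Gf p ((a - 1) * x + a * z) ∂(gaussianReal 0 1)|
          ≤ |x| * (p * 2 ^ (p-1) * |a - 1| ^ (p-1) * |x| ^ (p-1)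
            + p * 2 ^ (p-1) * |a| ^ (p-1) * (∫ z, |z| ^ (p-1) ∂(gaussianReal 0 1))) :=
            mul_le_mul_of_nonneg_left (hbnd x) (abs_nonneg x)
        _ = p * 2 ^ (p-1) * |a - 1| ^ (p-1) * (|x| * |x| ^ (p-1))
            + p * 2 ^ (p-1) * |a| ^ (p-1) * (∫ z, |z| ^ (p-1) ∂(gaussianReal 0 1)) * |x| := by
            ring
        _ = _ := by rw [abs_mul_rpow_self hp]
    -- integrability of the full inner integral
    have step3 : Integrable
        (fun x : ℝ => ∫ z, Gf p ((a - 1) * x + a * z) * (x + z) ∂(gaussianReal 0 1))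
        (Measure.map X ℙ) := hFint.integral_prod_left
    -- monotone comparison with x = 0
    have hmono0 : ∀ x : ℝ,
        x * (∫ z, Gf p (a * z) ∂(gaussianReal 0 1))
          ≤ x * ∫ z, Gf p ((a - 1) * x + a * z) ∂(gaussianReal 0 1) := by
      intro x
      have hIG0 : Integrable (fun z : ℝ => Gf p (a * z)) (gaussianReal 0 1) := by
        have := L_IG (p := p) hp 0 a
        simpa using this
      rcases le_total 0 x with hx | hx
      · refine mul_le_mul_of_nonneg_left ?_ hx
        refine integral_mono hIG0 (hIG x) fun z => Gf_mono hp ?_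
        nlinarith
      · refine mul_le_mul_of_nonpos_left ?_ hx
        refine integral_mono (hIG x) hIG0 fun z => Gf_mono hp ?_
        nlinarith
    have step5 : ∫ x, x * (∫ z, Gf p (a * z) ∂(gaussianReal 0 1)) ∂(Measure.map X ℙ)
        ≤ ∫ x, x * ∫ z, Gf p ((a - 1) * x + a * z) ∂(gaussianReal 0 1)
            ∂(Measure.map X ℙ) :=
      integral_mono (hμint.mul_const _) step2 hmono0
    have step6 : ∫ x, x * (∫ z, Gf p (a * z) ∂(gaussianReal 0 1)) ∂(Measure.map X ℙ) = 0 := by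
      rw [integral_mul_const, hμmean, zero_mul]
    have step4 : ∫ x, x * ∫ z, Gf p ((a - 1) * x + a * z) ∂(gaussianReal 0 1)
          ∂(Measure.map X ℙ)
        ≤ ∫ x, ∫ z, Gf p ((a - 1) * x + a * z) * (x + z) ∂(gaussianReal 0 1)
            ∂(Measure.map X ℙ) :=
      integral_mono step2 step3 step1
    linarith
  -- PART 2
  have part2 : MonotoneOn (fun a : ℝ => ∫ ω, |X ω - a * (X ω + Z ω)| ^ p)
      (Set.Ici (1 : ℝ)) := by
    intro a ha b hb hab
    simp only [Set.mem_Ici] at ha hb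
    have hup : Integrable (fun ω => |X ω - a * (X ω + Z ω)| ^ p) ℙ := by
      have := comb_int (1 - a) (-a)
      refine this.congr (Filter.Eventually.of_forall fun ω => ?_)
      show |(1 - a) * X ω + (-a) * Z ω| ^ p = |X ω - a * (X ω + Z ω)| ^ p
      rw [show (1 - a) * X ω + (-a) * Z ω = X ω - a * (X ω + Z ω) from by ring]
    have hvp : Integrable (fun ω => |X ω - b * (X ω + Z ω)| ^ p) ℙ := by
      have := comb_int (1 - b) (-b)
      refine this.congr (Filter.Eventually.of_forall fun ω => ?_)
      show |(1 - b) * X ω + (-b) * Z ω| ^ p = |X ω - b * (X ω + Z ω)| ^ p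
      rw [show (1 - b) * X ω + (-b) * Z ω = X ω - b * (X ω + Z ω) from by ring]
    have key : ∀ ω, |X ω - a * (X ω + Z ω)| ^ p
        + (b - a) * (Gf p ((a - 1) * X ω + a * Z ω) * (X ω + Z ω))
        ≤ |X ω - b * (X ω + Z ω)| ^ p := by
      intro ω
      have h2 := convex_ineq hp (X ω - a * (X ω + Z ω)) (X ω - b * (X ω + Z ω))
      have e : Gf p (X ω - a * (X ω + Z ω))
          * ((X ω - b * (X ω + Z ω)) - (X ω - a * (X ω + Z ω)))
          = (b - a) * (Gf p ((a - 1) * X ω + a * Z ω) * (X ω + Z ω)) := by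
        rw [show X ω - a * (X ω + Z ω) = -((a - 1) * X ω + a * Z ω) from by ring, Gf_neg]
        ring
      rw [e] at h2
      exact h2
    have hsum : Integrable (fun ω => |X ω - a * (X ω + Z ω)| ^ p
        + (b - a) * (Gf p ((a - 1) * X ω + a * Z ω) * (X ω + Z ω))) ℙ :=
      hup.add ((hGW a).const_mul _)
    have hle := integral_mono hsum hvp key
    rw [integral_add hup ((hGW a).const_mul _), integral_const_mul] at hle
    have hpos := part1 a ha
    have hba : (0:ℝ) ≤ b - a := by linarith
    dsimp only
    nlinarith [mul_nonneg hba hpos]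
  refine ⟨?_, part2⟩
  intro a ha
  have h := part1 a ha
  have he : (fun ω => g ((a - 1) * X ω + a * Z ω) * (X ω + Z ω))
      = fun ω => Gf p ((a - 1) * X ω + a * Z ω) * (X ω + Z ω) := by
    funext ω; rw [hg]; rfl
  rw [he]
  exact h
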